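/- Let U > 0, ω > 0, n ∈ ℕ, and for j = 1, …, n let p_j ∈ ℝ, d_j > 0, v_j ∈ ℝ, φ_j ∈ ℝ, and fix p^u ∈ ℝ. Consider the cross-channel mixer velocity field ẋ = U, ẏ = Σ_{j=1}^n 1_{[U p_j − d_j, U p_j + d_j]}(x) (v_j/d_j²)((x − U p_j)² − d_j²) cos(ω s + φ_j), where 1_E is the indicator of E and s is time. Fix p, t ∈ ℝ and let (X(s), Y(s)) be the solution with (X, Y)(t − p + p^u) = (U p^u, 0). Then X(t) = U p and Y(t) = M_c^u(p,t)/U exactly, where M_c^u(p,t) := ∫_{p^u}^{p} Σ_{j=1}^n 1_{[p_j − d_j/U, p_j + d_j/U]}(τ) U (v_j/d_j²)(U²(τ − p_j)² − d_j²) cos(ω(τ + t − p) + φ_j) dτ. -/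

import Mathlib

set_option maxHeartbeats 1000000



private lemma aux_sum_intervalIntegrable {ι : Type*} (s : Finset ι) (g : ι → ℝ → ℝ) (a b : ℝ)
    (h : ∀ j ∈ s, IntervalIntegrable (g j) MeasureTheory.volume a b) :
    IntervalIntegrable (fun x => ∑ j ∈ s, g j x) MeasureTheory.volume a b := by
  classical
  induction s using Finset.induction_on with
  | empty => simp
  | insert _ _ hnot ih =>
    rename_i i s'
    simp only [Finset.sum_insert hnot]
    exact (h i (Finset.mem_insert_self i s')).add
      (ih fun j hj => h j (Finset.mem_insert_of_mem hj))

/-- **Exact upstream streakline for the cross-channel micromixer.**  Two fluids move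
with uniform speed `U` along a straight channel with interface `y = 0`, agitated by
`n` cross-channels, the `j`-th centered at `x = U pⱼ` with half-width `dⱼ`, carrying
a parabolic-profile transverse velocity of amplitude `vⱼ` oscillating as
`cos(ω s + φⱼ)`.  The streakline particle labeled `p` at time `t` (the one which
passed through the anchor point `(U pᵘ, 0)` at time `t − p + pᵘ`) is located exactly
at `(U p, M_c^u(p,t)/U)`. -/
theorem cross_channel_upstream_streakline
    (U ω : ℝ) (hU : 0 < U) (hω : 0 < ω)
    (n : ℕ) (p' d v φ : Fin n → ℝ) (hd : ∀ j, 0 < d j)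
    (pu p t : ℝ)
    (X Y : ℝ → ℝ)
    (hX : ∀ s : ℝ, HasDerivAt X U s)
    (hY : ∀ s : ℝ, HasDerivAt Y
      (∑ j : Fin n,
        Set.indicator (Set.Icc (U * p' j - d j) (U * p' j + d j))
          (fun x => (v j / (d j) ^ 2) * ((x - U * p' j) ^ 2 - (d j) ^ 2)) (X s) *
          Real.cos (ω * s + φ j)) s)
    (hX0 : X (t - p + pu) = U * pu)
    (hY0 : Y (t - p + pu) = 0) :
    X t = U * p ∧
    Y t = (∫ τ in pu..p,
      ∑ j : Fin n,
        Set.indicator (Set.Icc (p' j - d j / U) (p' j + d j / U))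
          (fun τ' => U * (v j / (d j) ^ 2) * (U ^ 2 * (τ' - p' j) ^ 2 - (d j) ^ 2) *
            Real.cos (ω * (τ' + t - p) + φ j)) τ) / U := by
  have hUne : U ≠ 0 := ne_of_gt hU
  -- Step 1: formula for X
  have hXs : ∀ s, X s = U * (s - t + p) := by
    have hderiv : ∀ x : ℝ, HasDerivAt (fun s => X s - U * s) 0 x := by
      intro x
      have h : HasDerivAt (fun s => X s - U * s) (U - U * 1) x := (hX x).sub ((hasDerivAt_id x).const_mul U)
      simp only [mul_one, sub_self] at h; exact h
    have hconst : ∀ a b : ℝ, X a - U * a = X b - U * b :=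
      is_const_of_deriv_eq_zero (fun x => (hderiv x).differentiableAt)
        (fun x => (hderiv x).deriv) 
    intro s
    have h := hconst s (t - p + pu)
    rw [hX0] at h
    have : X s = U * s + (U * pu - U * (t - p + pu)) := by linarith
    rw [this]; ring
  have hXt : X t = U * p := by rw [hXs t]; ring
  refine ⟨hXt, ?_⟩
  -- the derivative of Y, as a function of s alone
  set f : ℝ → ℝ := fun s => ∑ j : Fin n,
        Set.indicator (Set.Icc (U * p' j - d j) (U * p' j + d j))
          (fun x => (v j / (d j) ^ 2) * ((x - U * p' j) ^ 2 - (d j) ^ 2)) (U * (s - t + p)) *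
          Real.cos (ω * s + φ j) with hfdef
  have hYf : ∀ s : ℝ, HasDerivAt Y (f s) s := by
    intro s
    have := hY s
    simpa only [hXs s] using this
  -- each summand of f, written as an indicator in s
  have hsummand : ∀ (j : Fin n) (s : ℝ),
      Set.indicator (Set.Icc (U * p' j - d j) (U * p' j + d j))
        (fun x => (v j / (d j) ^ 2) * ((x - U * p' j) ^ 2 - (d j) ^ 2)) (U * (s - t + p)) *
        Real.cos (ω * s + φ j)
      = Set.indicator ((fun s : ℝ => U * (s - t + p)) ⁻¹'
            Set.Icc (U * p' j - d j) (U * p' j + d j))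
          (fun s => (v j / (d j) ^ 2) * ((U * (s - t + p) - U * p' j) ^ 2 - (d j) ^ 2) *
            Real.cos (ω * s + φ j)) s := by
    intro j s
    by_cases h : U * (s - t + p) ∈ Set.Icc (U * p' j - d j) (U * p' j + d j)
    · rw [Set.indicator_of_mem h, Set.indicator_of_mem (by exact h)]
    · rw [Set.indicator_of_notMem h, Set.indicator_of_notMem (by exact h), zero_mul]
  -- integrability of f on any interval
  have hfint : ∀ a b : ℝ, IntervalIntegrable f MeasureTheory.volume a b := by
    intro a b
    rw [hfdef]
    apply aux_sum_intervalIntegrable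
    intro j _
    have hcont : Continuous (fun s : ℝ =>
        (v j / (d j) ^ 2) * ((U * (s - t + p) - U * p' j) ^ 2 - (d j) ^ 2) *
          Real.cos (ω * s + φ j)) := by continuity
    have hmeas : MeasurableSet ((fun s : ℝ => U * (s - t + p)) ⁻¹'
        Set.Icc (U * p' j - d j) (U * p' j + d j)) := by
      exact (measurable_const.mul ((measurable_id.sub measurable_const).add
        measurable_const)) measurableSet_Icc
    have : IntervalIntegrable (Set.indicator ((fun s : ℝ => U * (s - t + p)) ⁻¹'
        Set.Icc (U * p' j - d j) (U * p' j + d j))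
        (fun s => (v j / (d j) ^ 2) * ((U * (s - t + p) - U * p' j) ^ 2 - (d j) ^ 2) *
          Real.cos (ω * s + φ j))) MeasureTheory.volume a b := by
      rw [intervalIntegrable_iff]
      exact (hcont.intervalIntegrable a b).def'.indicator hmeas |>.mono_set (by rfl)
    refine this.congr ?_
    intro s _
    exact (hsummand j s).symm
  -- FTC: Y t = ∫ f over [t - p + pu, t]
  have hFTC : ∫ s in (t - p + pu)..t, f s = Y t - Y (t - p + pu) :=
    intervalIntegral.integral_eq_sub_of_hasDerivAt (fun s _ => hYf s) (hfint _ _)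
  have hYt : Y t = ∫ s in (t - p + pu)..t, f s := by
    rw [hFTC, hY0, sub_zero]
  -- change of variables: shift by t - p
  have hshift : (∫ τ in pu..p, f (τ + (t - p))) = ∫ s in (t - p + pu)..t, f s := by
    rw [intervalIntegral.integral_comp_add_right f (t - p)]
    congr 1 <;> ring
  -- pointwise identity between the target integrand and U * f (τ + (t - p))
  have hpoint : ∀ τ : ℝ,
      (∑ j : Fin n,
        Set.indicator (Set.Icc (p' j - d j / U) (p' j + d j / U))
          (fun τ' => U * (v j / (d j) ^ 2) * (U ^ 2 * (τ' - p' j) ^ 2 - (d j) ^ 2) *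
            Real.cos (ω * (τ' + t - p) + φ j)) τ)
      = U * f (τ + (t - p)) := by
    intro τ
    rw [hfdef]
    simp only []
    simp only [Finset.mul_sum]
    apply Finset.sum_congr rfl
    intro j _
    have harg : U * (τ + (t - p) - t + p) = U * τ := by ring
    rw [harg]
    have h1 : (p' j - d j / U ≤ τ) ↔ (U * p' j - d j ≤ U * τ) := by
      rw [← mul_le_mul_iff_right₀ hU, mul_sub, mul_div_cancel₀ _ hUne]
    have h2 : (τ ≤ p' j + d j / U) ↔ (U * τ ≤ U * p' j + d j) := by
      rw [← mul_le_mul_iff_right₀ hU, mul_add, mul_div_cancel₀ _ hUne]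
    by_cases h : U * τ ∈ Set.Icc (U * p' j - d j) (U * p' j + d j)
    · have hτ : τ ∈ Set.Icc (p' j - d j / U) (p' j + d j / U) := by
        rw [Set.mem_Icc] at h ⊢
        exact ⟨h1.mpr h.1, h2.mpr h.2⟩
      rw [Set.indicator_of_mem hτ, Set.indicator_of_mem h]
      have hcos : ω * (τ + t - p) + φ j = ω * (τ + (t - p)) + φ j := by ring
      rw [hcos]; ring
    · have hτ : τ ∉ Set.Icc (p' j - d j / U) (p' j + d j / U) := by
        rw [Set.mem_Icc] at h ⊢
        intro hc
        exact h ⟨h1.mp hc.1, h2.mp hc.2⟩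
      rw [Set.indicator_of_notMem hτ, Set.indicator_of_notMem h]
      ring
  -- put it all together
  have : (∫ τ in pu..p,
      ∑ j : Fin n,
        Set.indicator (Set.Icc (p' j - d j / U) (p' j + d j / U))
          (fun τ' => U * (v j / (d j) ^ 2) * (U ^ 2 * (τ' - p' j) ^ 2 - (d j) ^ 2) *
            Real.cos (ω * (τ' + t - p) + φ j)) τ)
      = U * ∫ τ in pu..p, f (τ + (t - p)) := by
    rw [← intervalIntegral.integral_const_mul]
    exact intervalIntegral.integral_congr fun τ _ => hpoint τ
  rw [this, hshift, ← hYt]; field_simp
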